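/- Hessian bound for the policy-gradient value function (Lemma 1, part 2): with the finite-MDP setup below, if additionally 0 ≤ r(s,a) ≤ R for all s, a, ‖∇_w log π(a|s;w)‖ ≤ G, and the second derivative satisfies ‖∇²_w log π(a|s;w)‖ ≤ L (operator norm) for all a, s, w, then for every w ∈ E the value function J(w) = Σ_τ q(τ; w) R(τ) is twice differentiable and its second derivative satisfies the operator-norm bound ‖∇²J(w)‖ ≤ (HG² + L)R/(1 − γ)²; in particular, ∇J is Lipschitz with constant (HG² + L)R/(1 − γ)². -/

import Mathlib

open Finset

private abbrev fc {S : Type*} {n : ℕ} (s₀ : S) (σ : Fin n → S) : Fin (n + 1) → S := Fin.cons s₀ σ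

private lemma sum_pi_succ {β M : Type*} [Fintype β] [AddCommMonoid M] {n : ℕ}
    (f : (Fin (n + 1) → β) → M) :
    ∑ g : Fin (n + 1) → β, f g = ∑ b : β, ∑ g : Fin n → β, f (Fin.cons b g) := by
  rw [← Equiv.sum_comp (Fin.consEquiv fun _ => β) f, Fintype.sum_prod_type]
  rfl

private lemma traj_mass_one {S A : Type*} [Fintype S] [Fintype A]
    (p : S → A → ℝ) (hp : ∀ s, ∑ a, p s a = 1)
    (P : S → A → S → ℝ) (hP : ∀ s a, ∑ s', P s a s' = 1) :
    ∀ (n : ℕ) (s₀ : S),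
      ∑ σ : Fin n → S, ∑ α : Fin n → A,
        ∏ i : Fin n, (p (fc s₀ σ i.castSucc) (α i) *
          P (fc s₀ σ i.castSucc) (α i) (σ i)) = 1 := by
  intro n
  induction n with
  | zero => intro s₀; simp
  | succ m ih =>
    intro s₀
    rw [sum_pi_succ]
    simp only [sum_pi_succ (β := A)]
    have key : ∀ (s₁ : S) (σ : Fin m → S) (a₀ : A) (α : Fin m → A),
        (∏ i : Fin (m+1), (p (fc s₀ (fc s₁ σ) i.castSucc) ((fc a₀ α) i) *
          P (fc s₀ (fc s₁ σ) i.castSucc) ((fc a₀ α) i) ((fc s₁ σ) i)))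
        = (p s₀ a₀ * P s₀ a₀ s₁) *
          ∏ i : Fin m, (p (fc s₁ σ i.castSucc) (α i) *
            P (fc s₁ σ i.castSucc) (α i) (σ i)) := by
      intro s₁ σ a₀ α
      rw [Fin.prod_univ_succ]
      simp [← Fin.succ_castSucc]
    calc ∑ s₁ : S, ∑ σ : Fin m → S, ∑ a₀ : A, ∑ α : Fin m → A,
        (∏ i : Fin (m+1), (p (fc s₀ (fc s₁ σ) i.castSucc) ((fc a₀ α) i) *
          P (fc s₀ (fc s₁ σ) i.castSucc) ((fc a₀ α) i) ((fc s₁ σ) i)))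
        = ∑ s₁ : S, ∑ a₀ : A, (p s₀ a₀ * P s₀ a₀ s₁) *
            ∑ σ : Fin m → S, ∑ α : Fin m → A,
              ∏ i : Fin m, (p (fc s₁ σ i.castSucc) (α i) *
                P (fc s₁ σ i.castSucc) (α i) (σ i)) := by
          refine Finset.sum_congr rfl fun s₁ _ => ?_
          rw [Finset.sum_comm]
          refine Finset.sum_congr rfl fun a₀ _ => ?_
          rw [Finset.mul_sum]
          refine Finset.sum_congr rfl fun σ _ => ?_
          rw [Finset.mul_sum]
          exact Finset.sum_congr rfl fun α _ => key s₁ σ a₀ α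
      _ = 1 := by
          simp only [ih, mul_one]
          rw [Finset.sum_comm]
          simp only [← Finset.mul_sum, hP]
          simp [hp]

private lemma traj_vanish {S A : Type*} [Fintype S] [Fintype A] [Nonempty S] [Nonempty A]
    (p : S → A → ℝ) (hp : ∀ s, ∑ a, p s a = 1)
    (P : S → A → S → ℝ) (hP : ∀ s a, ∑ s', P s a s' = 1)
    (c : S → A → ℝ) (hc : ∀ s, ∑ a, p s a * c s a = 0) :
    ∀ (n : ℕ) (j : Fin n) (s₀ : S) (ψ : (Fin n → S) → (Fin n → A) → ℝ)
      (_ : ∀ σ σ' α α', (∀ i : Fin n, (i : ℕ) < (j : ℕ) → σ i = σ' i) →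
        (∀ i : Fin n, (i : ℕ) < (j : ℕ) → α i = α' i) → ψ σ α = ψ σ' α'),
      ∑ σ : Fin n → S, ∑ α : Fin n → A,
        (∏ i : Fin n, (p (fc s₀ σ i.castSucc) (α i) *
          P (fc s₀ σ i.castSucc) (α i) (σ i))) *
          c (fc s₀ σ j.castSucc) (α j) * ψ σ α = 0 := by
  intro n
  induction n with
  | zero => exact fun j => j.elim0
  | succ m ih =>
    intro j s₀ ψ hψ
    rw [sum_pi_succ]
    simp only [sum_pi_succ (β := A)]
    have keyW : ∀ (s₁ : S) (σ : Fin m → S) (a₀ : A) (α : Fin m → A),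
        (∏ i : Fin (m+1), (p (fc s₀ (fc s₁ σ) i.castSucc) ((fc a₀ α) i) *
          P (fc s₀ (fc s₁ σ) i.castSucc) ((fc a₀ α) i) ((fc s₁ σ) i)))
        = (p s₀ a₀ * P s₀ a₀ s₁) *
          ∏ i : Fin m, (p (fc s₁ σ i.castSucc) (α i) *
            P (fc s₁ σ i.castSucc) (α i) (σ i)) := by
      intro s₁ σ a₀ α
      rw [Fin.prod_univ_succ]
      simp [fc, ← Fin.succ_castSucc]
    rcases Fin.eq_zero_or_eq_succ j with rfl | ⟨j', rfl⟩
    · -- j = 0 : ψ is constant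
      have hK : ∀ σ α, ψ σ α = ψ (Classical.arbitrary _) (Classical.arbitrary _) := by
        intro σ α
        exact hψ _ _ _ _ (fun i hi => absurd hi (by simp)) (fun i hi => absurd hi (by simp))
      set K := ψ (Classical.arbitrary _) (Classical.arbitrary _) with hKdef
      have : ∀ (s₁ : S) (σ : Fin m → S) (a₀ : A) (α : Fin m → A),
          (∏ i : Fin (m+1), (p (fc s₀ (fc s₁ σ) i.castSucc) ((fc a₀ α) i) *
            P (fc s₀ (fc s₁ σ) i.castSucc) ((fc a₀ α) i) ((fc s₁ σ) i))) *
            c (fc s₀ (fc s₁ σ) (0 : Fin (m+1)).castSucc) ((fc a₀ α) (0 : Fin (m+1))) *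
            ψ (fc s₁ σ) (fc a₀ α)
          = (p s₀ a₀ * c s₀ a₀) * (P s₀ a₀ s₁ * K) *
            ∏ i : Fin m, (p (fc s₁ σ i.castSucc) (α i) *
              P (fc s₁ σ i.castSucc) (α i) (σ i)) := by
        intro s₁ σ a₀ α
        rw [keyW, ← hK]
        simp [fc]
        ring
      simp only [this]
      calc ∑ s₁ : S, ∑ σ : Fin m → S, ∑ a₀ : A, ∑ α : Fin m → A,
            (p s₀ a₀ * c s₀ a₀) * (P s₀ a₀ s₁ * K) *
              ∏ i : Fin m, (p (fc s₁ σ i.castSucc) (α i) *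
                P (fc s₁ σ i.castSucc) (α i) (σ i))
          = ∑ s₁ : S, ∑ a₀ : A, (p s₀ a₀ * c s₀ a₀) * (P s₀ a₀ s₁ * K) := by
            refine Finset.sum_congr rfl fun s₁ _ => ?_
            rw [Finset.sum_comm]
            refine Finset.sum_congr rfl fun a₀ _ => ?_
            simp only [← Finset.mul_sum]
            rw [traj_mass_one p hp P hP m s₁, mul_one]
        _ = 0 := by
            rw [Finset.sum_comm]
            have h1 : ∀ a₀ : A, ∑ s₁ : S, (p s₀ a₀ * c s₀ a₀) * (P s₀ a₀ s₁ * K)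
                = (p s₀ a₀ * c s₀ a₀) * K := by
              intro a₀
              simp only [← Finset.mul_sum]
              rw [← Finset.sum_mul, hP, one_mul]
            simp only [h1]
            rw [← Finset.sum_mul, hc, zero_mul]
    · -- j = succ j'
      have key2 : ∀ (s₁ : S) (σ : Fin m → S) (a₀ : A) (α : Fin m → A),
          (∏ i : Fin (m+1), (p (fc s₀ (fc s₁ σ) i.castSucc) ((fc a₀ α) i) *
            P (fc s₀ (fc s₁ σ) i.castSucc) ((fc a₀ α) i) ((fc s₁ σ) i))) *
            c (fc s₀ (fc s₁ σ) (j'.succ).castSucc) ((fc a₀ α) j'.succ) *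
            ψ (fc s₁ σ) (fc a₀ α)
          = (p s₀ a₀ * P s₀ a₀ s₁) *
            ((∏ i : Fin m, (p (fc s₁ σ i.castSucc) (α i) *
              P (fc s₁ σ i.castSucc) (α i) (σ i))) *
              c (fc s₁ σ j'.castSucc) (α j') * ψ (fc s₁ σ) (fc a₀ α)) := by
        intro s₁ σ a₀ α
        rw [keyW]
        rw [← Fin.succ_castSucc]
        simp [fc]
        ring
      simp only [key2]
      have inner0 : ∀ (s₁ : S) (a₀ : A),
          ∑ σ : Fin m → S, ∑ α : Fin m → A,
            (∏ i : Fin m, (p (fc s₁ σ i.castSucc) (α i) *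
              P (fc s₁ σ i.castSucc) (α i) (σ i))) *
              c (fc s₁ σ j'.castSucc) (α j') * ψ (fc s₁ σ) (fc a₀ α) = 0 := by
        intro s₁ a₀
        refine ih j' s₁ (fun σ α => ψ (fc s₁ σ) (fc a₀ α)) ?_
        intro σ σ' α α' hσ hα
        refine hψ _ _ _ _ ?_ ?_
        · intro i
          refine Fin.cases ?_ ?_ i
          · intro _; simp [fc]
          · intro k hk
            simp only [fc, Fin.cons_succ]
            exact hσ k (Nat.lt_of_succ_lt_succ (by simpa using hk))
        · intro i
          refine Fin.cases ?_ ?_ i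
          · intro _; simp [fc]
          · intro k hk
            simp only [fc, Fin.cons_succ]
            exact hα k (Nat.lt_of_succ_lt_succ (by simpa using hk))
      refine Finset.sum_eq_zero fun s₁ _ => ?_
      rw [Finset.sum_comm]
      refine Finset.sum_eq_zero fun a₀ _ => ?_
      simp only [← Finset.mul_sum]
      rw [inner0 s₁ a₀, mul_zero]

section
variable {E : Type*} [NormedAddCommGroup E] [NormedSpace ℝ E]

private lemma hasfd_cexp (g : E → ℝ) (hg : Differentiable ℝ g) (c : ℝ) (x : E) :
    HasFDerivAt (fun x => c * Real.exp (g x)) ((c * Real.exp (g x)) • fderiv ℝ g x) x := by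
  have h1 : HasFDerivAt (fun x => Real.exp (g x)) (Real.exp (g x) • fderiv ℝ g x) x :=
    (hg x).hasFDerivAt.exp
  have h2 := h1.const_mul c
  rwa [smul_smul] at h2

private lemma second_deriv_cexp (g : E → ℝ) (hg : ContDiff ℝ 2 g) (c : ℝ) (w u v : E) :
    fderiv ℝ (fderiv ℝ (fun x => c * Real.exp (g x))) w u v =
      c * Real.exp (g w) * (fderiv ℝ g w u * fderiv ℝ g w v +
        fderiv ℝ (fderiv ℝ g) w u v) := by
  have hgd : Differentiable ℝ g := hg.differentiable (by norm_num)
  have hg1 : ContDiff ℝ 1 (fderiv ℝ g) := hg.fderiv_right (by norm_num)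
  have hfe : fderiv ℝ (fun x => c * Real.exp (g x)) =
      fun x => (c * Real.exp (g x)) • fderiv ℝ g x :=
    funext fun x => (hasfd_cexp g hgd c x).fderiv
  rw [hfe]
  have hs : HasFDerivAt (fun x => c * Real.exp (g x))
      ((c * Real.exp (g w)) • fderiv ℝ g w) w := hasfd_cexp g hgd c w
  have hV : HasFDerivAt (fderiv ℝ g) (fderiv ℝ (fderiv ℝ g) w) w :=
    ((hg1.differentiable (by norm_num)) w).hasFDerivAt
  have := hs.smul hV
  rw [show (fun x => (c * Real.exp (g x)) • fderiv ℝ g x) = (fun x => c * Real.exp (g x)) • fderiv ℝ g from rfl, this.fderiv]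
  simp only [ContinuousLinearMap.add_apply, ContinuousLinearMap.smul_apply,
    ContinuousLinearMap.smulRight_apply, smul_eq_mul]
  ring

private lemma geom_arith_eq2 (γ : ℝ) :
    ∀ n : ℕ, (1 - γ)^2 * ∑ h ∈ Finset.range n, ((h : ℝ) + 1) * γ ^ h
      = 1 - γ ^ n * (1 + (n : ℝ) * (1 - γ)) := by
  intro n
  induction n with
  | zero => simp
  | succ m ih =>
    rw [Finset.sum_range_succ, mul_add, ih, pow_succ]
    push_cast
    ring

private lemma geom_arith_le2 (γ : ℝ) (h0 : 0 ≤ γ) (h1 : γ < 1) (n : ℕ) :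
    ∑ h ∈ Finset.range n, ((h : ℝ) + 1) * γ ^ h ≤ 1 / (1 - γ) ^ 2 := by
  have h1γ : (0:ℝ) < 1 - γ := by linarith
  have hpos : (0:ℝ) < (1 - γ) ^ 2 := by positivity
  rw [le_div_iff₀ hpos, mul_comm]
  calc (1 - γ)^2 * ∑ h ∈ Finset.range n, ((h : ℝ) + 1) * γ ^ h
      = 1 - γ ^ n * (1 + (n : ℝ) * (1 - γ)) := geom_arith_eq2 γ n
    _ ≤ 1 := by
        have : 0 ≤ γ ^ n * (1 + (n : ℝ) * (1 - γ)) := by positivity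
        linarith

end

set_option maxHeartbeats 2000000 in
private lemma core_bound {S A : Type*} [Fintype S] [Fintype A]
    {d H : ℕ} {γ G L R : ℝ}
    (hγ0 : 0 < γ) (hγ1 : γ < 1) (hG0 : 0 ≤ G) (hL0 : 0 ≤ L) (hR0 : 0 ≤ R)
    (p : A → S → EuclideanSpace ℝ (Fin d) → ℝ)
    (hpC : ∀ a s, ContDiff ℝ 2 (fun x => Real.log (p a s x)))
    (hGb : ∀ (a : A) (s : S) (w u : EuclideanSpace ℝ (Fin d)),
      |fderiv ℝ (fun x => Real.log (p a s x)) w u| ≤ G * ‖u‖)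
    (hLb : ∀ (a : A) (s : S) (w u v : EuclideanSpace ℝ (Fin d)),
      |fderiv ℝ (fderiv ℝ (fun x => Real.log (p a s x))) w u v| ≤ L * (‖u‖ * ‖v‖))
    (r : S → A → ℝ) (hr : ∀ s a, 0 ≤ r s a ∧ r s a ≤ R)
    (q : ((Fin (H + 1) → S) × (Fin H → A)) → EuclideanSpace ℝ (Fin d) → ℝ)
    (hq0 : ∀ τ w, 0 ≤ q τ w)
    (hmass : ∀ w, ∑ τ : ((Fin (H + 1) → S) × (Fin H → A)), q τ w = 1)
    (hvanish : ∀ (w : EuclideanSpace ℝ (Fin d)) (k : Fin H) (c : S → A → ℝ),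
      (∀ s, ∑ a, p a s w * c s a = 0) →
      ∀ (ψ : ((Fin (H + 1) → S) × (Fin H → A)) → ℝ),
        (∀ τ τ' : ((Fin (H + 1) → S) × (Fin H → A)),
          (∀ i : Fin (H+1), (i:ℕ) ≤ (k:ℕ) → τ.1 i = τ'.1 i) →
          (∀ i : Fin H, (i:ℕ) < (k:ℕ) → τ.2 i = τ'.2 i) → ψ τ = ψ τ') →
        ∑ τ : ((Fin (H + 1) → S) × (Fin H → A)),
          q τ w * (c (τ.1 k.castSucc) (τ.2 k) * ψ τ) = 0)
    (hcz : ∀ (w u : EuclideanSpace ℝ (Fin d)) (s : S),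
      ∑ a, p a s w * fderiv ℝ (fun x => Real.log (p a s x)) w u = 0)
    (hcz2 : ∀ (w u v : EuclideanSpace ℝ (Fin d)) (s : S),
      ∑ a, p a s w * (fderiv ℝ (fun x => Real.log (p a s x)) w u *
        fderiv ℝ (fun x => Real.log (p a s x)) w v +
        fderiv ℝ (fderiv ℝ (fun x => Real.log (p a s x))) w u v) = 0)
    (Rew : ((Fin (H + 1) → S) × (Fin H → A)) → ℝ)
    (hRew : ∀ τ, Rew τ = ∑ h : Fin H, γ ^ (h : ℕ) * r (τ.1 h.castSucc) (τ.2 h))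
    (CR : ((Fin (H + 1) → S) × (Fin H → A)) → ℝ)
    (hCR : ∀ τ x, CR τ * Real.exp (∑ h : Fin H, Real.log (p (τ.2 h) (τ.1 h.castSucc) x))
      = q τ x * Rew τ)
    (J : EuclideanSpace ℝ (Fin d) → ℝ)
    (hJ2 : J = fun x => ∑ τ : ((Fin (H + 1) → S) × (Fin H → A)),
      CR τ * Real.exp (∑ h : Fin H, Real.log (p (τ.2 h) (τ.1 h.castSucc) x)))
    (w u v : EuclideanSpace ℝ (Fin d)) :
    |fderiv ℝ (fderiv ℝ J) w u v| ≤
      ((H : ℝ) * G ^ 2 + L) * R / (1 - γ) ^ 2 * (‖u‖ * ‖v‖) := by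
  classical
  set Du := fun (i : Fin H) (τ : (Fin (H + 1) → S) × (Fin H → A)) =>
    fderiv ℝ (fun x => Real.log (p (τ.2 i) (τ.1 i.castSucc) x)) w u with hDu
  set Dv := fun (i : Fin H) (τ : (Fin (H + 1) → S) × (Fin H → A)) =>
    fderiv ℝ (fun x => Real.log (p (τ.2 i) (τ.1 i.castSucc) x)) w v with hDv
  set DD := fun (i : Fin H) (τ : (Fin (H + 1) → S) × (Fin H → A)) =>
    fderiv ℝ (fderiv ℝ (fun x => Real.log (p (τ.2 i) (τ.1 i.castSucc) x))) w u v with hDD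
  set rh := fun (h : Fin H) (τ : (Fin (H + 1) → S) × (Fin H → A)) =>
    r (τ.1 h.castSucc) (τ.2 h) with hrh
  have hgsC : ∀ τ : (Fin (H + 1) → S) × (Fin H → A),
      ContDiff ℝ 2 (fun x : EuclideanSpace ℝ (Fin d) =>
        ∑ h : Fin H, Real.log (p (τ.2 h) (τ.1 h.castSucc) x)) :=
    fun τ => ContDiff.sum fun i _ => hpC _ _
  have hΦC : ∀ τ : (Fin (H + 1) → S) × (Fin H → A),
      ContDiff ℝ 2 (fun x : EuclideanSpace ℝ (Fin d) =>
        CR τ * Real.exp (∑ h : Fin H, Real.log (p (τ.2 h) (τ.1 h.castSucc) x))) :=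
    fun τ => contDiff_const.mul (Real.contDiff_exp.comp (hgsC τ))
  have one_le_two' : (2 : WithTop ℕ∞) ≠ 0 := by norm_num
  have hb : fderiv ℝ J = fun x => ∑ τ : (Fin (H + 1) → S) × (Fin H → A),
      fderiv ℝ (fun y => CR τ * Real.exp (∑ h : Fin H, Real.log (p (τ.2 h) (τ.1 h.castSucc) y))) x := by
    funext x
    rw [hJ2]
    exact fderiv_fun_sum fun τ _ => ((hΦC τ).differentiable one_le_two').differentiableAt
  have hc' : fderiv ℝ (fderiv ℝ J) w = ∑ τ : (Fin (H + 1) → S) × (Fin H → A),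
      fderiv ℝ (fderiv ℝ (fun y => CR τ * Real.exp (∑ h : Fin H, Real.log (p (τ.2 h) (τ.1 h.castSucc) y)))) w := by
    rw [hb]
    exact fderiv_fun_sum fun τ _ =>
      (((hΦC τ).fderiv_right (m := 1) (by norm_num)).differentiable (by norm_num)).differentiableAt
  have hDg : ∀ (τ : (Fin (H + 1) → S) × (Fin H → A)) (x : EuclideanSpace ℝ (Fin d)),
      fderiv ℝ (fun y => ∑ h : Fin H, Real.log (p (τ.2 h) (τ.1 h.castSucc) y)) x
        = ∑ i : Fin H, fderiv ℝ (fun y => Real.log (p (τ.2 i) (τ.1 i.castSucc) y)) x :=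
    fun τ x => fderiv_fun_sum fun i _ => ((hpC _ _).differentiable one_le_two').differentiableAt
  have hD2g : ∀ τ : (Fin (H + 1) → S) × (Fin H → A),
      fderiv ℝ (fderiv ℝ (fun y => ∑ h : Fin H, Real.log (p (τ.2 h) (τ.1 h.castSucc) y))) w u v
        = ∑ i : Fin H, DD i τ := by
    intro τ
    rw [show fderiv ℝ (fun y => ∑ h : Fin H, Real.log (p (τ.2 h) (τ.1 h.castSucc) y))
        = fun x => ∑ i : Fin H, fderiv ℝ (fun y => Real.log (p (τ.2 i) (τ.1 i.castSucc) y)) x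
      from funext (hDg τ)]
    rw [fderiv_fun_sum fun i _ =>
      (((hpC _ _).fderiv_right (m := 1) (by norm_num)).differentiable (by norm_num)).differentiableAt]
    simp only [ContinuousLinearMap.sum_apply, hDD]
  have hd2 : fderiv ℝ (fderiv ℝ J) w u v
      = ∑ τ : (Fin (H + 1) → S) × (Fin H → A), q τ w * Rew τ *
          ((∑ i : Fin H, Du i τ) * (∑ j : Fin H, Dv j τ) + ∑ i : Fin H, DD i τ) := by
    rw [hc']
    simp only [ContinuousLinearMap.sum_apply]
    refine Finset.sum_congr rfl fun τ _ => ?_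
    rw [second_deriv_cexp _ (hgsC τ) (CR τ) w u v]
    rw [hD2g τ, hDg τ w]
    simp only [ContinuousLinearMap.sum_apply]
    rw [hCR τ w]
  -- reorganize into per-step sums
  have hd3 : fderiv ℝ (fderiv ℝ J) w u v
      = ∑ h : Fin H, γ ^ (h : ℕ) * ∑ τ : (Fin (H + 1) → S) × (Fin H → A),
          q τ w * rh h τ *
          ((∑ i : Fin H, Du i τ) * (∑ j : Fin H, Dv j τ) + ∑ i : Fin H, DD i τ) := by
    rw [hd2]
    have key : ∀ τ : (Fin (H + 1) → S) × (Fin H → A), q τ w * Rew τ *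
        ((∑ i : Fin H, Du i τ) * (∑ j : Fin H, Dv j τ) + ∑ i : Fin H, DD i τ)
        = ∑ h : Fin H, γ ^ (h : ℕ) * (q τ w * rh h τ *
          ((∑ i : Fin H, Du i τ) * (∑ j : Fin H, Dv j τ) + ∑ i : Fin H, DD i τ)) := by
      intro τ
      rw [hRew, Finset.mul_sum, Finset.sum_mul]
      refine Finset.sum_congr rfl fun h _ => ?_
      simp only [hrh]
      ring
    rw [Finset.sum_congr rfl fun τ _ => key τ]
    rw [Finset.sum_comm]
    simp only [Finset.mul_sum]
  set B := fun (h i j : Fin H) => ∑ τ : (Fin (H + 1) → S) × (Fin H → A),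
    q τ w * rh h τ * (Du i τ * Dv j τ + if i = j then DD i τ else 0) with hB
  have hd4 : ∀ h : Fin H, ∑ τ : (Fin (H + 1) → S) × (Fin H → A),
      q τ w * rh h τ *
        ((∑ i : Fin H, Du i τ) * (∑ j : Fin H, Dv j τ) + ∑ i : Fin H, DD i τ)
      = ∑ i : Fin H, ∑ j : Fin H, B h i j := by
    intro h
    have key : ∀ τ : (Fin (H + 1) → S) × (Fin H → A),
        q τ w * rh h τ *
          ((∑ i : Fin H, Du i τ) * (∑ j : Fin H, Dv j τ) + ∑ i : Fin H, DD i τ)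
        = ∑ i : Fin H, ∑ j : Fin H,
            q τ w * rh h τ * (Du i τ * Dv j τ + if i = j then DD i τ else 0) := by
      intro τ
      have e1 : (∑ i : Fin H, Du i τ) * (∑ j : Fin H, Dv j τ)
          = ∑ i : Fin H, ∑ j : Fin H, Du i τ * Dv j τ := Finset.sum_mul_sum _ _ _ _
      have e2 : ∑ i : Fin H, DD i τ
          = ∑ i : Fin H, ∑ j : Fin H, (if i = j then DD i τ else 0) := by
        refine Finset.sum_congr rfl fun i _ => ?_
        rw [Finset.sum_ite_eq]
        simp
      rw [e1, e2, ← Finset.sum_add_distrib]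
      rw [Finset.mul_sum]
      refine Finset.sum_congr rfl fun i _ => ?_
      rw [← Finset.sum_add_distrib, Finset.mul_sum]
    rw [Finset.sum_congr rfl fun τ _ => key τ]
    rw [Finset.sum_comm]
    refine Finset.sum_congr rfl fun i _ => ?_
    rw [Finset.sum_comm]
  -- vanishing of B outside the square
  have hBzero : ∀ h i j : Fin H, ¬((i : ℕ) ≤ (h : ℕ) ∧ (j : ℕ) ≤ (h : ℕ)) → B h i j = 0 := by
    intro h i j hnot
    rcases eq_or_ne i j with rfl | hij
    · -- diagonal case
      have hhi : (h : ℕ) < (i : ℕ) := by omega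
      have hz := hvanish w i
        (fun s a => fderiv ℝ (fun x => Real.log (p a s x)) w u *
          fderiv ℝ (fun x => Real.log (p a s x)) w v +
          fderiv ℝ (fderiv ℝ (fun x => Real.log (p a s x))) w u v)
        (hcz2 w u v) (fun τ => rh h τ) ?_
      · rw [hB]
        refine Eq.trans ?_ hz
        refine Finset.sum_congr rfl fun τ _ => ?_
        simp only [hDu, hDv, hDD, eq_self_iff_true, if_true]
        ring
      · intro τ τ' h1 h2
        simp only [hrh]
        rw [h1 h.castSucc (by simpa using le_of_lt hhi), h2 h hhi]
    · rcases Nat.lt_or_ge (i : ℕ) (j : ℕ) with hlt | hge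
      · have hhj : (h : ℕ) < (j : ℕ) := by omega
        have hz := hvanish w j (fun s a => fderiv ℝ (fun x => Real.log (p a s x)) w v)
          (hcz w v) (fun τ => rh h τ * Du i τ) ?_
        · rw [hB]
          refine Eq.trans ?_ hz
          refine Finset.sum_congr rfl fun τ _ => ?_
          simp only [hDu, hDv, if_neg hij]
          ring
        · intro τ τ' h1 h2
          simp only [hrh, hDu]
          rw [h1 h.castSucc (by simpa using le_of_lt hhj), h2 h hhj,
            h1 i.castSucc (by simpa using le_of_lt hlt), h2 i hlt]
      · have hij' : (i : ℕ) ≠ (j : ℕ) := fun hh => hij (Fin.ext hh)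
        have hlt : (j : ℕ) < (i : ℕ) := by omega
        have hhi : (h : ℕ) < (i : ℕ) := by omega
        have hz := hvanish w i (fun s a => fderiv ℝ (fun x => Real.log (p a s x)) w u)
          (hcz w u) (fun τ => rh h τ * Dv j τ) ?_
        · rw [hB]
          refine Eq.trans ?_ hz
          refine Finset.sum_congr rfl fun τ _ => ?_
          simp only [hDu, hDv, if_neg hij]
          ring
        · intro τ τ' h1 h2
          simp only [hrh, hDv]
          rw [h1 h.castSucc (by simpa using le_of_lt hhi), h2 h hhi,
            h1 j.castSucc (by simpa using le_of_lt hlt), h2 j hlt]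
  -- bound on B
  have hY_le : ∀ (i j : Fin H) (τ : (Fin (H + 1) → S) × (Fin H → A)),
      |Du i τ * Dv j τ + (if i = j then DD i τ else 0)|
      ≤ (G^2 + (if i = j then L else 0)) * (‖u‖ * ‖v‖) := by
    intro i j τ
    refine le_trans (abs_add_le _ _) ?_
    have h1 : |Du i τ * Dv j τ| ≤ G^2 * (‖u‖ * ‖v‖) := by
      rw [abs_mul]
      calc |Du i τ| * |Dv j τ| ≤ (G * ‖u‖) * (G * ‖v‖) :=
            mul_le_mul (hGb _ _ _ _) (hGb _ _ _ _) (abs_nonneg _) (by positivity)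
        _ = G^2 * (‖u‖ * ‖v‖) := by ring
    have h2 : |if i = j then DD i τ else 0| ≤ (if i = j then L else 0) * (‖u‖ * ‖v‖) := by
      split_ifs
      · exact hLb _ _ _ _ _
      · simp
    calc |Du i τ * Dv j τ| + |if i = j then DD i τ else 0|
        ≤ G^2 * (‖u‖ * ‖v‖) + (if i = j then L else 0) * (‖u‖ * ‖v‖) := add_le_add h1 h2
      _ = (G^2 + (if i = j then L else 0)) * (‖u‖ * ‖v‖) := by ring
  have hBbound : ∀ h i j : Fin H,
      |B h i j| ≤ R * ((G^2 + (if i = j then L else 0)) * (‖u‖ * ‖v‖)) := by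
    intro h i j
    rw [hB]
    refine le_trans (Finset.abs_sum_le_sum_abs _ _) ?_
    have key : ∀ τ : (Fin (H + 1) → S) × (Fin H → A),
        |q τ w * rh h τ * (Du i τ * Dv j τ + if i = j then DD i τ else 0)|
        ≤ q τ w * (R * ((G^2 + (if i = j then L else 0)) * (‖u‖ * ‖v‖))) := by
      intro τ
      rw [abs_mul, abs_mul, abs_of_nonneg (hq0 τ w), abs_of_nonneg (hr _ _).1, mul_assoc]
      refine mul_le_mul_of_nonneg_left ?_ (hq0 τ w)
      exact mul_le_mul (hr _ _).2 (hY_le i j τ) (abs_nonneg _) hR0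
    refine le_trans (Finset.sum_le_sum fun τ _ => key τ) ?_
    rw [← Finset.sum_mul, hmass w, one_mul]
  -- counting
  have hcard : ∀ h : Fin H,
      (∑ i : Fin H, if (i : ℕ) ≤ (h : ℕ) then (1:ℝ) else 0) ≤ ((h : ℕ) : ℝ) + 1 := by
    intro h
    rw [Finset.sum_boole]
    have : (Finset.univ.filter (fun i : Fin H => (i : ℕ) ≤ (h : ℕ))).card ≤ (h : ℕ) + 1 := by
      refine le_trans (Finset.card_le_card_of_injOn (t := Finset.range ((h : ℕ) + 1)) Fin.val ?_ Fin.val_injective.injOn) ?_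
      · intro x hx
        simp only [Finset.mem_coe, Finset.mem_filter] at hx
        simp only [Finset.mem_coe, Finset.mem_range]
        omega
      · rw [Finset.card_range]
    exact_mod_cast this
  have huv0 : (0:ℝ) ≤ ‖u‖ * ‖v‖ := by positivity
  have hTh : ∀ h : Fin H, |∑ i : Fin H, ∑ j : Fin H, B h i j|
      ≤ (((h : ℕ) : ℝ) + 1) * (((H : ℝ) * G^2 + L) * (R * (‖u‖ * ‖v‖))) := by
    intro h
    have hbnd : ∀ i j : Fin H, |B h i j| ≤
        (if (i : ℕ) ≤ (h : ℕ) then (1:ℝ) else 0) * (if (j : ℕ) ≤ (h : ℕ) then (1:ℝ) else 0) *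
          (G^2 * (R * (‖u‖ * ‖v‖))) +
        (if i = j then (if (i : ℕ) ≤ (h : ℕ) then (1:ℝ) else 0) * (L * (R * (‖u‖ * ‖v‖))) else 0) := by
      intro i j
      by_cases hin : (i : ℕ) ≤ (h : ℕ) ∧ (j : ℕ) ≤ (h : ℕ)
      · rw [if_pos hin.1, if_pos hin.2]
        refine le_trans (hBbound h i j) ?_
        split_ifs with he
        · exact le_of_eq (by ring)
        · exact le_of_eq (by ring)
      · rw [hBzero h i j hin, abs_zero]
        split_ifs <;> positivity
    refine le_trans (Finset.abs_sum_le_sum_abs _ _) ?_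
    refine le_trans (Finset.sum_le_sum fun i _ =>
      le_trans (Finset.abs_sum_le_sum_abs _ _) (Finset.sum_le_sum fun j _ => hbnd i j)) ?_
    have keyi : ∀ i : Fin H, (∑ j : Fin H,
        ((if (i : ℕ) ≤ (h : ℕ) then (1:ℝ) else 0) * (if (j : ℕ) ≤ (h : ℕ) then (1:ℝ) else 0) *
          (G^2 * (R * (‖u‖ * ‖v‖))) +
        (if i = j then (if (i : ℕ) ≤ (h : ℕ) then (1:ℝ) else 0) * (L * (R * (‖u‖ * ‖v‖))) else 0)))
        ≤ (if (i : ℕ) ≤ (h : ℕ) then (1:ℝ) else 0) *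
            (((H : ℝ) * G^2 + L) * (R * (‖u‖ * ‖v‖))) := by
      intro i
      rw [Finset.sum_add_distrib]
      have e1 : ∑ j : Fin H,
          (if (i : ℕ) ≤ (h : ℕ) then (1:ℝ) else 0) * (if (j : ℕ) ≤ (h : ℕ) then (1:ℝ) else 0) *
            (G^2 * (R * (‖u‖ * ‖v‖)))
          = ((if (i : ℕ) ≤ (h : ℕ) then (1:ℝ) else 0) * (G^2 * (R * (‖u‖ * ‖v‖)))) *
              ∑ j : Fin H, (if (j : ℕ) ≤ (h : ℕ) then (1:ℝ) else 0) := by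
        rw [Finset.mul_sum]
        exact Finset.sum_congr rfl fun j _ => by ring
      have e2 : ∑ j : Fin H,
          (if i = j then (if (i : ℕ) ≤ (h : ℕ) then (1:ℝ) else 0) * (L * (R * (‖u‖ * ‖v‖))) else 0)
          = (if (i : ℕ) ≤ (h : ℕ) then (1:ℝ) else 0) * (L * (R * (‖u‖ * ‖v‖))) := by
        rw [Finset.sum_ite_eq]
        simp
      rw [e1, e2]
      have t1 : (0:ℝ) ≤ (if (i : ℕ) ≤ (h : ℕ) then (1:ℝ) else 0) := by split_ifs <;> norm_num
      have hH1 : ((h : ℕ) : ℝ) + 1 ≤ (H : ℝ) := by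
        have := h.isLt
        exact_mod_cast Nat.succ_le_of_lt this
      have step1 : ((if (i : ℕ) ≤ (h : ℕ) then (1:ℝ) else 0) * (G^2 * (R * (‖u‖ * ‖v‖)))) *
            (∑ j : Fin H, (if (j : ℕ) ≤ (h : ℕ) then (1:ℝ) else 0))
          ≤ ((if (i : ℕ) ≤ (h : ℕ) then (1:ℝ) else 0) * (G^2 * (R * (‖u‖ * ‖v‖)))) *
            ((H : ℝ)) := by
        refine mul_le_mul_of_nonneg_left (le_trans (hcard h) hH1) ?_
        positivity
      refine le_trans (add_le_add_left step1 _) (le_of_eq (by ring))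
    refine le_trans (Finset.sum_le_sum fun i _ => keyi i) ?_
    rw [← Finset.sum_mul]
    refine mul_le_mul_of_nonneg_right (hcard h) ?_
    positivity
  -- final assembly
  rw [hd3]
  refine le_trans (Finset.abs_sum_le_sum_abs _ _) ?_
  have step : ∀ h : Fin H,
      |γ ^ (h : ℕ) * ∑ τ : (Fin (H + 1) → S) × (Fin H → A),
          q τ w * rh h τ *
          ((∑ i : Fin H, Du i τ) * (∑ j : Fin H, Dv j τ) + ∑ i : Fin H, DD i τ)|
      ≤ (((h : ℕ) : ℝ) + 1) * γ ^ (h : ℕ) *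
          (((H : ℝ) * G^2 + L) * (R * (‖u‖ * ‖v‖))) := by
    intro h
    rw [abs_mul, abs_of_nonneg (le_of_lt (pow_pos hγ0 _)), hd4 h]
    calc γ ^ (h : ℕ) * |∑ i : Fin H, ∑ j : Fin H, B h i j|
        ≤ γ ^ (h : ℕ) * ((((h : ℕ) : ℝ) + 1) * (((H : ℝ) * G^2 + L) * (R * (‖u‖ * ‖v‖)))) :=
          mul_le_mul_of_nonneg_left (hTh h) (le_of_lt (pow_pos hγ0 _))
      _ = (((h : ℕ) : ℝ) + 1) * γ ^ (h : ℕ) * (((H : ℝ) * G^2 + L) * (R * (‖u‖ * ‖v‖))) := by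
          ring
  refine le_trans (Finset.sum_le_sum fun h _ => step h) ?_
  have hKnn : (0:ℝ) ≤ ((H : ℝ) * G^2 + L) * (R * (‖u‖ * ‖v‖)) := by positivity
  calc ∑ h : Fin H, (((h : ℕ) : ℝ) + 1) * γ ^ (h : ℕ) *
        (((H : ℝ) * G^2 + L) * (R * (‖u‖ * ‖v‖)))
      = (∑ n ∈ Finset.range H, ((n : ℝ) + 1) * γ ^ n) *
        (((H : ℝ) * G^2 + L) * (R * (‖u‖ * ‖v‖))) := by
        rw [← Finset.sum_mul]
        congr 1
        exact Fin.sum_univ_eq_sum_range (fun n => ((n : ℝ) + 1) * γ ^ n) H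
    _ ≤ (1 / (1 - γ)^2) * (((H : ℝ) * G^2 + L) * (R * (‖u‖ * ‖v‖))) :=
        mul_le_mul_of_nonneg_right (geom_arith_le2 γ (le_of_lt hγ0) hγ1 H) hKnn
    _ = ((H : ℝ) * G ^ 2 + L) * R / (1 - γ) ^ 2 * (‖u‖ * ‖v‖) := by
        field_simp

set_option maxHeartbeats 1000000 in
/-- Hessian bound for the policy-gradient value function (Lemma 1, part 2):
if `0 ≤ r ≤ R`, `‖∇_w log π‖ ≤ G` and `‖∇²_w log π‖ ≤ L`, then `J` is twice
differentiable with `‖∇²J(w)‖ ≤ (HG² + L)R/(1−γ)²`; in particular `∇J` is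
Lipschitz with this constant. -/
theorem policy_value_hessian_bound
    (S A : Type*) [Fintype S] [Fintype A] [Nonempty S] [Nonempty A]
    (H d : ℕ) (hH : 0 < H) (hd : 0 < d)
    (μ : S → ℝ) (hμ0 : ∀ s, 0 ≤ μ s) (hμ1 : ∑ s, μ s = 1)
    (P : S → A → S → ℝ) (hP0 : ∀ s a s', 0 ≤ P s a s')
    (hP1 : ∀ s a, ∑ s', P s a s' = 1)
    (r : S → A → ℝ) (R : ℝ) (hr : ∀ s a, 0 ≤ r s a ∧ r s a ≤ R)
    (γ : ℝ) (hγ0 : 0 < γ) (hγ1 : γ < 1)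
    (π : A → S → EuclideanSpace ℝ (Fin d) → ℝ)
    (hπ0 : ∀ a s w, 0 < π a s w) (hπ1 : ∀ s w, ∑ a, π a s w = 1)
    (hπC : ∀ a s, ContDiff ℝ 2 (fun w => Real.log (π a s w)))
    (G L : ℝ)
    (hG : ∀ (a : A) (s : S) (w : EuclideanSpace ℝ (Fin d)),
      ‖gradient (fun v => Real.log (π a s v)) w‖ ≤ G)
    (hL : ∀ (a : A) (s : S) (w : EuclideanSpace ℝ (Fin d)),
      ‖iteratedFDeriv ℝ 2 (fun v => Real.log (π a s v)) w‖ ≤ L)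
    (q : ((Fin (H + 1) → S) × (Fin H → A)) → EuclideanSpace ℝ (Fin d) → ℝ)
    (hq : ∀ τ w, q τ w =
      μ (τ.1 0) * (∏ h : Fin H, π (τ.2 h) (τ.1 h.castSucc) w)
        * ∏ h : Fin H, P (τ.1 h.castSucc) (τ.2 h) (τ.1 h.succ))
    (Rew : ((Fin (H + 1) → S) × (Fin H → A)) → ℝ)
    (hRew : ∀ τ, Rew τ = ∑ h : Fin H, γ ^ (h : ℕ) * r (τ.1 h.castSucc) (τ.2 h))
    (J : EuclideanSpace ℝ (Fin d) → ℝ)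
    (hJ : ∀ w, J w = ∑ τ : (Fin (H + 1) → S) × (Fin H → A), q τ w * Rew τ) :
    ContDiff ℝ 2 J ∧
    (∀ w : EuclideanSpace ℝ (Fin d),
      ‖iteratedFDeriv ℝ 2 J w‖ ≤ ((H : ℝ) * G ^ 2 + L) * R / (1 - γ) ^ 2) ∧
    (∀ w v : EuclideanSpace ℝ (Fin d),
      ‖gradient J w - gradient J v‖
        ≤ ((H : ℝ) * G ^ 2 + L) * R / (1 - γ) ^ 2 * ‖w - v‖) := by
  -- basic nonnegativity facts
  have hR0 : 0 ≤ R := le_trans (hr (Classical.arbitrary S) (Classical.arbitrary A)).1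
    (hr _ _).2
  have hG0 : 0 ≤ G := le_trans (norm_nonneg _) (hG (Classical.arbitrary A) (Classical.arbitrary S) 0)
  have hL0 : 0 ≤ L := le_trans (norm_nonneg _) (hL (Classical.arbitrary A) (Classical.arbitrary S) 0)
  have h1γ : (0:ℝ) < 1 - γ := by linarith
  -- the log-policy and its exp representation
  have hπe : ∀ (a : A) (s : S), (fun x : EuclideanSpace ℝ (Fin d) => π a s x) =
      fun x => Real.exp (Real.log (π a s x)) := by
    intro a s; funext x; exact (Real.exp_log (hπ0 a s x)).symm
  have hπaC : ∀ (a : A) (s : S), ContDiff ℝ 2 (fun x : EuclideanSpace ℝ (Fin d) => π a s x) := by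
    intro a s; rw [hπe]; exact Real.contDiff_exp.comp (hπC a s)
  -- the exponential form of each summand of J
  have hgsC : ∀ τ : ((Fin (H + 1) → S) × (Fin H → A)), ContDiff ℝ 2 (fun x : EuclideanSpace ℝ (Fin d) =>
      ∑ h : Fin H, Real.log (π (τ.2 h) (τ.1 h.castSucc) x)) :=
    fun τ => ContDiff.sum fun i _ => hπC _ _
  have hqRew : ∀ (τ : ((Fin (H + 1) → S) × (Fin H → A))) (x : EuclideanSpace ℝ (Fin d)), q τ x * Rew τ =
      (μ (τ.1 0) * (∏ h : Fin H, P (τ.1 h.castSucc) (τ.2 h) (τ.1 h.succ)) * Rew τ) *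
        Real.exp (∑ h : Fin H, Real.log (π (τ.2 h) (τ.1 h.castSucc) x)) := by
    intro τ x
    rw [hq, Real.exp_sum]
    have : ∏ h : Fin H, π (τ.2 h) (τ.1 h.castSucc) x =
        ∏ h : Fin H, Real.exp (Real.log (π (τ.2 h) (τ.1 h.castSucc) x)) :=
      Finset.prod_congr rfl fun h _ => by rw [Real.exp_log (hπ0 _ _ _)]
    rw [this]; ring
  have hJ2 : J = fun x : EuclideanSpace ℝ (Fin d) => ∑ τ : ((Fin (H + 1) → S) × (Fin H → A)),
      (μ (τ.1 0) * (∏ h : Fin H, P (τ.1 h.castSucc) (τ.2 h) (τ.1 h.succ)) * Rew τ) *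
        Real.exp (∑ h : Fin H, Real.log (π (τ.2 h) (τ.1 h.castSucc) x)) := by
    funext x; rw [hJ]; exact Finset.sum_congr rfl fun τ _ => hqRew τ x
  have hJC : ContDiff ℝ 2 J := by
    rw [hJ2]
    exact ContDiff.sum fun τ _ => contDiff_const.mul (Real.contDiff_exp.comp (hgsC τ))
  -- mass one
  have hsplit : ∀ (w : EuclideanSpace ℝ (Fin d)) (f : ((Fin (H + 1) → S) × (Fin H → A)) → ℝ),
      ∑ τ : ((Fin (H + 1) → S) × (Fin H → A)), f τ =
        ∑ s₀ : S, ∑ σ : Fin H → S, ∑ α : Fin H → A, f (fc s₀ σ, α) := by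
    intro w f
    rw [Fintype.sum_prod_type, sum_pi_succ]
  have hqfc : ∀ (w : EuclideanSpace ℝ (Fin d)) (s₀ : S) (σ : Fin H → S) (α : Fin H → A),
      q (fc s₀ σ, α) w = μ s₀ *
        ∏ i : Fin H, ((fun s a => π a s w) (fc s₀ σ i.castSucc) (α i) *
          P (fc s₀ σ i.castSucc) (α i) (σ i)) := by
    intro w s₀ σ α
    rw [hq]
    simp only [fc, Fin.cons_zero, Fin.cons_succ]
    rw [mul_assoc, ← Finset.prod_mul_distrib]
  have hmass : ∀ w : EuclideanSpace ℝ (Fin d), ∑ τ : ((Fin (H + 1) → S) × (Fin H → A)), q τ w = 1 := by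
    intro w
    rw [hsplit w (fun τ => q τ w)]
    have hm := traj_mass_one (fun s a => π a s w) (fun s => hπ1 s w) P hP1 H
    calc ∑ s₀ : S, ∑ σ : Fin H → S, ∑ α : Fin H → A, q (fc s₀ σ, α) w
        = ∑ s₀ : S, μ s₀ := by
          refine Finset.sum_congr rfl fun s₀ _ => ?_
          simp only [hqfc w s₀]
          simp only [← Finset.mul_sum]
          rw [hm s₀, mul_one]
      _ = 1 := hμ1
  have hq0 : ∀ (τ : ((Fin (H + 1) → S) × (Fin H → A))) (w : EuclideanSpace ℝ (Fin d)), 0 ≤ q τ w := by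
    intro τ w; rw [hq]
    refine mul_nonneg (mul_nonneg (hμ0 _) (Finset.prod_nonneg fun h _ => le_of_lt (hπ0 _ _ _)))
      (Finset.prod_nonneg fun h _ => hP0 _ _ _)
  -- vanishing corollary
  have hvanishT : ∀ (w : EuclideanSpace ℝ (Fin d)) (k : Fin H) (c : S → A → ℝ),
      (∀ s, ∑ a, π a s w * c s a = 0) →
      ∀ (ψ : ((Fin (H + 1) → S) × (Fin H → A)) → ℝ), (∀ τ τ' : ((Fin (H + 1) → S) × (Fin H → A)), (∀ i : Fin (H+1), (i:ℕ) ≤ (k:ℕ) → τ.1 i = τ'.1 i) →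
        (∀ i : Fin H, (i:ℕ) < (k:ℕ) → τ.2 i = τ'.2 i) → ψ τ = ψ τ') →
      ∑ τ : ((Fin (H + 1) → S) × (Fin H → A)), q τ w * (c (τ.1 k.castSucc) (τ.2 k) * ψ τ) = 0 := by
    intro w k c hc ψ hψ
    rw [hsplit w]
    have hv := traj_vanish (fun s a => π a s w) (fun s => hπ1 s w) P hP1 c
      (fun s => hc s) H k
    have key : ∀ (s₀ : S) (σ : Fin H → S) (α : Fin H → A),
        q (fc s₀ σ, α) w * (c ((fc s₀ σ : Fin (H+1) → S) k.castSucc) (α k) * ψ (fc s₀ σ, α))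
        = μ s₀ * ((∏ i : Fin H, ((fun s a => π a s w) (fc s₀ σ i.castSucc) (α i) *
            P (fc s₀ σ i.castSucc) (α i) (σ i))) *
          c (fc s₀ σ k.castSucc) (α k) * ψ (fc s₀ σ, α)) := by
      intro s₀ σ α
      rw [hqfc w s₀ σ α]
      ring
    calc ∑ s₀ : S, ∑ σ : Fin H → S, ∑ α : Fin H → A,
          q (fc s₀ σ, α) w * (c ((fc s₀ σ : Fin (H+1) → S) k.castSucc) (α k) * ψ (fc s₀ σ, α))
        = ∑ s₀ : S, μ s₀ * ∑ σ : Fin H → S, ∑ α : Fin H → A,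
            (∏ i : Fin H, ((fun s a => π a s w) (fc s₀ σ i.castSucc) (α i) *
              P (fc s₀ σ i.castSucc) (α i) (σ i))) *
              c (fc s₀ σ k.castSucc) (α k) * ψ (fc s₀ σ, α) := by
          refine Finset.sum_congr rfl fun s₀ _ => ?_
          simp only [key s₀]
          simp only [← Finset.mul_sum]
      _ = 0 := by
          refine Finset.sum_eq_zero fun s₀ _ => ?_
          rw [hv s₀ (fun σ α => ψ (fc s₀ σ, α)) ?_, mul_zero]
          intro σ σ' α α' hσ hα
          refine hψ _ _ ?_ ?_
          · intro i
            refine Fin.cases ?_ ?_ i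
            · intro _; simp [fc]
            · intro m hm
              simp only [fc, Fin.cons_succ]
              exact hσ m (Nat.lt_of_lt_of_le (Nat.lt_succ_self m) (by simpa using hm))
          · intro i hi
            exact hα i hi
  -- the core second-derivative bound
  have one_le_two'' : (2 : WithTop ℕ∞) ≠ 0 := by norm_num
  have hGb : ∀ (a : A) (s : S) (w u : EuclideanSpace ℝ (Fin d)),
      |fderiv ℝ (fun x => Real.log (π a s x)) w u| ≤ G * ‖u‖ := by
    intro a s w u
    have h1 : ‖fderiv ℝ (fun x => Real.log (π a s x)) w‖
        = ‖gradient (fun x => Real.log (π a s x)) w‖ := by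
      rw [show gradient (fun x => Real.log (π a s x)) w
          = (InnerProductSpace.toDual ℝ (EuclideanSpace ℝ (Fin d))).symm
              (fderiv ℝ (fun x => Real.log (π a s x)) w) from rfl,
        LinearIsometryEquiv.norm_map]
    have h2 := (fderiv ℝ (fun x => Real.log (π a s x)) w).le_opNorm u
    rw [Real.norm_eq_abs] at h2
    refine le_trans h2 ?_
    rw [h1]
    exact mul_le_mul_of_nonneg_right (hG a s w) (norm_nonneg u)
  have hLb : ∀ (a : A) (s : S) (w u v : EuclideanSpace ℝ (Fin d)),
      |fderiv ℝ (fderiv ℝ (fun x => Real.log (π a s x))) w u v| ≤ L * (‖u‖ * ‖v‖) := by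
    intro a s w u v
    have h2 : fderiv ℝ (fderiv ℝ (fun x => Real.log (π a s x))) w u v
        = iteratedFDeriv ℝ 2 (fun x => Real.log (π a s x)) w ![u, v] := by
      rw [iteratedFDeriv_two_apply]
      simp
    rw [show |fderiv ℝ (fderiv ℝ (fun x => Real.log (π a s x))) w u v|
        = ‖iteratedFDeriv ℝ 2 (fun x => Real.log (π a s x)) w ![u, v]‖ by
      rw [Real.norm_eq_abs, h2]]
    refine le_trans (ContinuousMultilinearMap.le_opNorm _ _) ?_
    have h3 : ∏ i : Fin 2, ‖(![u, v] : Fin 2 → EuclideanSpace ℝ (Fin d)) i‖ = ‖u‖ * ‖v‖ := by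
      rw [Fin.prod_univ_two]
      simp
    rw [h3]
    exact mul_le_mul_of_nonneg_right (hL a s w) (by positivity)
  have hcz : ∀ (w u : EuclideanSpace ℝ (Fin d)) (s : S),
      ∑ a, π a s w * fderiv ℝ (fun x => Real.log (π a s x)) w u = 0 := by
    intro w u s
    have hterm : ∀ a, π a s w * fderiv ℝ (fun x => Real.log (π a s x)) w u
        = fderiv ℝ (fun x => π a s x) w u := by
      intro a
      have h0 := hasfd_cexp (fun x => Real.log (π a s x))
        ((hπC a s).differentiable one_le_two'') 1 w
      rw [show (fun x => 1 * Real.exp (Real.log (π a s x))) = fun x => π a s x from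
        funext fun x => by rw [one_mul, Real.exp_log (hπ0 a s x)]] at h0
      rw [show (1 : ℝ) * Real.exp (Real.log (π a s w)) = π a s w by
        rw [one_mul, Real.exp_log (hπ0 a s w)]] at h0
      rw [h0.fderiv]
      simp [smul_eq_mul]
    rw [Finset.sum_congr rfl fun a _ => hterm a]
    have hds : fderiv ℝ (fun x => ∑ a, π a s x) w = ∑ a, fderiv ℝ (fun x => π a s x) w :=
      fderiv_fun_sum fun a _ => ((hπaC a s).differentiable one_le_two'').differentiableAt
    calc ∑ a, fderiv ℝ (fun x => π a s x) w u
        = (∑ a, fderiv ℝ (fun x => π a s x) w) u := by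
          rw [ContinuousLinearMap.sum_apply]
      _ = (fderiv ℝ (fun x => ∑ a, π a s x) w) u := by rw [hds]
      _ = (fderiv ℝ (fun _ : EuclideanSpace ℝ (Fin d) => (1:ℝ)) w) u := by
          rw [show (fun x => ∑ a, π a s x) = fun _ : EuclideanSpace ℝ (Fin d) => (1:ℝ) from
            funext fun x => hπ1 s x]
      _ = 0 := by simp
  have hcz2 : ∀ (w u v : EuclideanSpace ℝ (Fin d)) (s : S),
      ∑ a, π a s w * (fderiv ℝ (fun x => Real.log (π a s x)) w u *
        fderiv ℝ (fun x => Real.log (π a s x)) w v +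
        fderiv ℝ (fderiv ℝ (fun x => Real.log (π a s x))) w u v) = 0 := by
    intro w u v s
    have hterm : ∀ a, π a s w * (fderiv ℝ (fun x => Real.log (π a s x)) w u *
        fderiv ℝ (fun x => Real.log (π a s x)) w v +
        fderiv ℝ (fderiv ℝ (fun x => Real.log (π a s x))) w u v)
        = fderiv ℝ (fderiv ℝ (fun x => π a s x)) w u v := by
      intro a
      have h0 := second_deriv_cexp (fun x => Real.log (π a s x)) (hπC a s) 1 w u v
      rw [show (fun x => 1 * Real.exp (Real.log (π a s x))) = fun x => π a s x from
        funext fun x => by rw [one_mul, Real.exp_log (hπ0 a s x)]] at h0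
      rw [h0, one_mul, Real.exp_log (hπ0 a s w)]
    rw [Finset.sum_congr rfl fun a _ => hterm a]
    have hds : fderiv ℝ (fun x => ∑ a, π a s x)
        = fun x => ∑ a : A, fderiv ℝ (fun y => π a s y) x :=
      funext fun x => fderiv_fun_sum fun a _ =>
        ((hπaC a s).differentiable one_le_two'').differentiableAt
    have hds2 : fderiv ℝ (fun x => ∑ a : A, fderiv ℝ (fun y => π a s y) x) w
        = ∑ a : A, fderiv ℝ (fderiv ℝ (fun y => π a s y)) w :=
      fderiv_fun_sum fun a _ =>
        (((hπaC a s).fderiv_right (m := 1) (by norm_num)).differentiable (by norm_num)).differentiableAt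
    calc ∑ a, fderiv ℝ (fderiv ℝ (fun x => π a s x)) w u v
        = (∑ a : A, fderiv ℝ (fderiv ℝ (fun x => π a s x)) w) u v := by
          simp only [ContinuousLinearMap.sum_apply]
      _ = fderiv ℝ (fderiv ℝ (fun x => ∑ a, π a s x)) w u v := by rw [hds, hds2]
      _ = fderiv ℝ (fderiv ℝ (fun _ : EuclideanSpace ℝ (Fin d) => (1:ℝ))) w u v := by
          rw [show (fun x => ∑ a, π a s x) = fun _ : EuclideanSpace ℝ (Fin d) => (1:ℝ) from
            funext fun x => hπ1 s x]
      _ = 0 := by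
          rw [fderiv_fun_const]
          rw [show (0 : EuclideanSpace ℝ (Fin d) → (EuclideanSpace ℝ (Fin d) →L[ℝ] ℝ)) =
            fun _ => 0 from rfl, fderiv_fun_const]
          rfl
  have hcore : ∀ (w u v : EuclideanSpace ℝ (Fin d)), |fderiv ℝ (fderiv ℝ J) w u v| ≤
      ((H : ℝ) * G ^ 2 + L) * R / (1 - γ) ^ 2 * (‖u‖ * ‖v‖) := by
    intro w u v
    exact core_bound hγ0 hγ1 hG0 hL0 hR0 π hπC hGb hLb r hr q hq0 hmass hvanishT hcz hcz2
      Rew hRew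
      (fun τ => μ (τ.1 0) * (∏ h : Fin H, P (τ.1 h.castSucc) (τ.2 h) (τ.1 h.succ)) * Rew τ)
      (fun τ x => (hqRew τ x).symm) J hJ2 w u v
  have hC0 : 0 ≤ ((H : ℝ) * G ^ 2 + L) * R / (1 - γ) ^ 2 := by positivity
  refine ⟨hJC, ?_, ?_⟩
  · -- iterated fderiv bound
    intro w
    refine ContinuousMultilinearMap.opNorm_le_bound hC0 fun m => ?_
    rw [iteratedFDeriv_two_apply]
    calc ‖fderiv ℝ (fderiv ℝ J) w (m 0) (m 1)‖
        ≤ ((H : ℝ) * G ^ 2 + L) * R / (1 - γ) ^ 2 * (‖m 0‖ * ‖m 1‖) := hcore w (m 0) (m 1)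
      _ = ((H : ℝ) * G ^ 2 + L) * R / (1 - γ) ^ 2 * ∏ i : Fin 2, ‖m i‖ := by
          rw [Fin.prod_univ_two]
  · -- Lipschitz gradient
    intro w v
    have hgrad : ∀ x : EuclideanSpace ℝ (Fin d), gradient J x = (InnerProductSpace.toDual ℝ (EuclideanSpace ℝ (Fin d))).symm (fderiv ℝ J x) :=
      fun x => rfl
    have hnorm : ‖gradient J w - gradient J v‖ = ‖fderiv ℝ J w - fderiv ℝ J v‖ := by
      rw [hgrad, hgrad, ← LinearIsometryEquiv.map_sub, LinearIsometryEquiv.norm_map]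
    rw [hnorm]
    have hJ1 : ContDiff ℝ 1 (fderiv ℝ J) := hJC.fderiv_right (by norm_num)
    have := Convex.norm_image_sub_le_of_norm_fderiv_le
      (f := fderiv ℝ J) (C := ((H : ℝ) * G ^ 2 + L) * R / (1 - γ) ^ 2) (s := Set.univ)
      (fun x _ => (hJ1.differentiable (by norm_num)).differentiableAt)
      (fun x _ => ?_) convex_univ (Set.mem_univ v) (Set.mem_univ w)
    · exact this
    · refine ContinuousLinearMap.opNorm_le_bound _ hC0 fun u' => ?_
      refine ContinuousLinearMap.opNorm_le_bound _ (by positivity) fun v' => ?_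
      calc ‖fderiv ℝ (fderiv ℝ J) x u' v'‖
          ≤ ((H : ℝ) * G ^ 2 + L) * R / (1 - γ) ^ 2 * (‖u'‖ * ‖v'‖) := hcore x u' v'
        _ = ((H : ℝ) * G ^ 2 + L) * R / (1 - γ) ^ 2 * ‖u'‖ * ‖v'‖ := by ring
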